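/- Let A be an m×n matrix of linear forms on P² (entries linear in x0,x1,x2) with m ≤ n, such that A has rank m at a generic point. For a point P ∈ P², the rank of A(P) drops below m if and only if all maximal minors of A vanish at P. Specialize: for the 3×4 matrix L(x) = [[x1,x1,x2,x2],[x2,ω x2,ω x0,x0],[ω x0,x0,x1,ω x1]] over ℂ with ω a primitive cube root of unity, L has rank 2 exactly at the six points (1,0,0), (0,1,0), (0,0,1), (1,1,1), (1,ω,ω²), (1,ω²,ω) of P². -/

import Mathlib

open Matrix

section AuxStmt15

private lemma rank_submatrix_le'' {K : Type*} [Field K] {m n m' n' : Type*}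
    [Fintype m] [Fintype n] [Fintype m'] [Fintype n'] [DecidableEq m] [DecidableEq n]
    (A : Matrix m n K) (f : m' → m) (g : n' → n) :
    (A.submatrix f g).rank ≤ A.rank := by
  have h : A.submatrix f g =
      (Matrix.of fun i k => if f i = k then (1 : K) else 0) * A *
        (Matrix.of fun k j => if k = g j then (1 : K) else 0) := by
    ext i j
    rw [Matrix.mul_apply]
    simp [Matrix.mul_apply, ite_mul, mul_ite, Finset.sum_ite_eq, Finset.sum_ite_eq']
  rw [h]
  exact le_trans (Matrix.rank_mul_le_left _ _) (Matrix.rank_mul_le_right _ _)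

private lemma det_eq_zero_of_rank_lt' {K : Type*} [Field K] {n : ℕ}
    {B : Matrix (Fin n) (Fin n) K} (h : B.rank < n) : B.det = 0 := by
  by_contra hd
  have hu := Matrix.rank_of_isUnit B ((Matrix.isUnit_iff_isUnit_det B).2 (isUnit_iff_ne_zero.2 hd))
  rw [hu, Fintype.card_fin] at h
  exact lt_irrefl _ h

private lemma part1_aux {K : Type} [Field K] (A : Matrix (Fin 3) (Fin 4) K) :
    A.rank < 3 ↔ ∀ f : Fin 3 → Fin 4, Function.Injective f → (A.submatrix id f).det = 0 := by
  constructor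
  · intro h f _
    exact det_eq_zero_of_rank_lt' (lt_of_le_of_lt (rank_submatrix_le'' A id f) h)
  · intro h
    by_contra h3
    push_neg at h3
    have hr : A.rank = 3 := le_antisymm (by simpa using A.rank_le_card_height) h3
    classical
    have hsp : Module.finrank K (Submodule.span K (Set.range Aᵀ)) = 3 := by
      rw [Matrix.rank_eq_finrank_span_cols] at hr; exact hr
    obtain ⟨s, hst, hspan, hind⟩ := exists_linearIndependent K (Set.range Aᵀ)
    have hsfin : s.Finite := (Set.finite_range Aᵀ).subset hst
    haveI : Fintype s := hsfin.fintype
    have hcard : s.toFinset.card = 3 := by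
      rw [← finrank_span_set_eq_card hind, hspan, hsp]
    obtain ⟨v0, v1, v2, h01, h02, h12, hs3⟩ := Finset.card_eq_three.mp hcard
    have hmem : ∀ v ∈ ({v0, v1, v2} : Finset (Fin 3 → K)), ∃ j, Aᵀ j = v := by
      intro v hv
      exact hst (by rw [← Set.mem_toFinset, hs3]; exact hv)
    obtain ⟨j0, hj0⟩ := hmem v0 (by simp)
    obtain ⟨j1, hj1⟩ := hmem v1 (by simp)
    obtain ⟨j2, hj2⟩ := hmem v2 (by simp)
    have hj01 : j0 ≠ j1 := fun e => h01 (by rw [← hj0, ← hj1, e])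
    have hj02 : j0 ≠ j2 := fun e => h02 (by rw [← hj0, ← hj2, e])
    have hj12 : j1 ≠ j2 := fun e => h12 (by rw [← hj1, ← hj2, e])
    have hinj : Function.Injective (![j0, j1, j2] : Fin 3 → Fin 4) := by
      intro i j hij
      fin_cases i <;> fin_cases j <;> simp_all
    have hdet := h ![j0, j1, j2] hinj
    have hBT : (A.submatrix id ![j0, j1, j2])ᵀ = ![v0, v1, v2] := by
      funext j
      fin_cases j
      · exact hj0
      · exact hj1
      · exact hj2
    have hli : LinearIndependent K ((A.submatrix id ![j0, j1, j2])ᵀ) := by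
      suffices hv : LinearIndependent K (![v0, v1, v2] : Fin 3 → Fin 3 → K) by
        exact cast (congrArg (fun y : Fin 3 → Fin 3 → K => LinearIndependent K y) hBT.symm) hv
      rw [linearIndependent_iff_card_eq_finrank_span]
      have hrange : Set.range (![v0, v1, v2] : Fin 3 → Fin 3 → K) = s := by
        have hset : Set.range (![v0, v1, v2] : Fin 3 → Fin 3 → K)
            = ({v0, v1, v2} : Set (Fin 3 → K)) := by
          apply Set.eq_of_subset_of_subset
          · rintro _ ⟨j, rfl⟩; fin_cases j <;> simp
          · rintro y hy
            simp only [Set.mem_insert_iff, Set.mem_singleton_iff] at hy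
            rcases hy with rfl | rfl | rfl
            · exact ⟨0, rfl⟩
            · exact ⟨1, rfl⟩
            · exact ⟨2, rfl⟩
        rw [hset, ← Set.coe_toFinset s, hs3]
        simp
      rw [Set.finrank, hrange, hspan, hsp, Fintype.card_fin]
    have hUnit : IsUnit (A.submatrix id ![j0, j1, j2]) :=
      Matrix.linearIndependent_cols_iff_isUnit.mp hli
    exact ((Matrix.isUnit_iff_isUnit_det _).mp hUnit).ne_zero hdet

private lemma rank_le_two' (A : Matrix (Fin 3) (Fin 4) ℂ) (u v : Fin 4 → ℂ)
    (h : ∀ i , ∃ c d : ℂ, A i = c • u + d • v) : A.rank ≤ 2 := by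
  rw [Matrix.rank_eq_finrank_span_row]
  have hle : Submodule.span ℂ (Set.range A) ≤ Submodule.span ℂ (Set.range ![u, v]) := by
    rw [Submodule.span_le]
    rintro _ ⟨i, rfl⟩
    obtain ⟨c, d, hcd⟩ := h i
    rw [hcd]
    exact Submodule.add_mem _
      (Submodule.smul_mem _ _ (Submodule.subset_span ⟨0, rfl⟩))
      (Submodule.smul_mem _ _ (Submodule.subset_span ⟨1, rfl⟩))
  have hcard2 := finrank_range_le_card (R := ℂ) ![u, v]
  exact le_trans (Submodule.finrank_mono hle) (by simpa [Set.finrank] using hcard2)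

private lemma two_le_rank' (A : Matrix (Fin 3) (Fin 4) ℂ) (i j : Fin 3) (k l : Fin 4)
    (h : A i k * A j l - A i l * A j k ≠ 0) : 2 ≤ A.rank := by
  have hle := rank_submatrix_le'' A ![i, j] ![k, l]
  have hdet : (A.submatrix ![i, j] ![k, l]).det = A i k * A j l - A i l * A j k := by
    rw [Matrix.det_fin_two]
    rfl
  have hdu : (A.submatrix ![i, j] ![k, l]).det ≠ 0 := by rw [hdet]; exact h
  have h2 : (A.submatrix ![i, j] ![k, l]).rank = 2 := by
    have := Matrix.rank_of_isUnit (A.submatrix ![i, j] ![k, l])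
      ((Matrix.isUnit_iff_isUnit_det _).2 (isUnit_iff_ne_zero.2 hdu))
    simpa using this
  omega

end AuxStmt15

/-- A 3×4 matrix of linear forms drops below full rank exactly where all its maximal
minors vanish; and the specific 3×4 matrix `L(x)` from the Fermat cubic has rank 2
exactly at the six points `(1,0,0), (0,1,0), (0,0,1), (1,1,1), (1,ω,ω²), (1,ω²,ω)`
of `P²`. -/
theorem stmt15 (ω : ℂ) (hω : IsPrimitiveRoot ω 3) :
    (∀ {K : Type} [Field K] (A : Matrix (Fin 3) (Fin 4) K),
      A.rank < 3 ↔ ∀ f : Fin 3 → Fin 4, Function.Injective f →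
        (A.submatrix id f).det = 0) ∧
    (∀ x : Fin 3 → ℂ, x ≠ 0 →
      (((Matrix.of ![![x 1, x 1, x 2, x 2],
            ![x 2, ω * x 2, ω * x 0, x 0],
            ![ω * x 0, x 0, x 1, ω * x 1]]) : Matrix (Fin 3) (Fin 4) ℂ).rank = 2 ↔
        ∃ t : ℂ, t ≠ 0 ∧
          (x = t • ![1, 0, 0] ∨ x = t • ![0, 1, 0] ∨ x = t • ![0, 0, 1] ∨
           x = t • ![1, 1, 1] ∨ x = t • ![1, ω, ω ^ 2] ∨ x = t • ![1, ω ^ 2, ω]))) := by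
  have hw3 : ω ^ 3 = 1 := hω.pow_eq_one
  have hw1 : ω ≠ 1 := hω.ne_one (by norm_num)
  have hwm1 : ω - 1 ≠ 0 := sub_ne_zero.mpr hw1
  have hq : ω ^ 2 + ω + 1 = 0 := by
    rcases mul_eq_zero.mp (show (ω - 1) * (ω ^ 2 + ω + 1) = 0 by linear_combination hw3) with h | h
    · exact absurd (sub_eq_zero.mp h) hw1
    · exact h
  have hw0 : ω ≠ 0 := by
    intro h; rw [h] at hw3; norm_num at hw3
  have hp4 : ω ^ 4 = ω := by linear_combination ω * hw3
  constructor
  · intro K _ A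
    exact part1_aux A
  · intro x hx
    set M : Matrix (Fin 3) (Fin 4) ℂ := Matrix.of ![![x 1, x 1, x 2, x 2],
        ![x 2, ω * x 2, ω * x 0, x 0],
        ![ω * x 0, x 0, x 1, ω * x 1]] with hMdef
    constructor
    · intro hr
      have minor0 : ∀ f : Fin 3 → Fin 4, (M.submatrix id f).det = 0 := by
        intro f
        apply det_eq_zero_of_rank_lt'
        calc (M.submatrix id f).rank ≤ M.rank := rank_submatrix_le'' M id f
        _ = 2 := hr
        _ < 3 := by norm_num
      have h1 := minor0 ![0, 1, 2]
      have h2 := minor0 ![0, 1, 3]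
      have h3 := minor0 ![0, 2, 3]
      have h4 := minor0 ![1, 2, 3]
      rw [show M.submatrix id ![0, 1, 2]
          = !![x 1, x 1, x 2; x 2, ω * x 2, ω * x 0; ω * x 0, x 0, x 1] from by
        ext i j; fin_cases i <;> fin_cases j <;> rfl, Matrix.det_fin_three] at h1
      rw [show M.submatrix id ![0, 1, 3]
          = !![x 1, x 1, x 2; x 2, ω * x 2, x 0; ω * x 0, x 0, ω * x 1] from by
        ext i j; fin_cases i <;> fin_cases j <;> rfl, Matrix.det_fin_three] at h2
      rw [show M.submatrix id ![0, 2, 3]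
          = !![x 1, x 2, x 2; x 2, ω * x 0, x 0; ω * x 0, x 1, ω * x 1] from by
        ext i j; fin_cases i <;> fin_cases j <;> rfl, Matrix.det_fin_three] at h3
      rw [show M.submatrix id ![1, 2, 3]
          = !![x 1, x 2, x 2; ω * x 2, ω * x 0, x 0; x 0, x 1, ω * x 1] from by
        ext i j; fin_cases i <;> fin_cases j <;> rfl, Matrix.det_fin_three] at h4
      simp only [Matrix.of_apply, Matrix.cons_val', Matrix.cons_val_zero, Matrix.cons_val_one,
        Matrix.head_cons, Matrix.empty_val', Matrix.cons_val_fin_one, Matrix.head_fin_const,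
        Matrix.cons_val_two, Matrix.tail_cons] at h1 h2 h3 h4
      have hA : x 1 * (x 1 * x 2 - x 0 ^ 2) = 0 := by
        rcases mul_eq_zero.mp (show ((3 : ℂ) * ω) * (x 1 * (x 1 * x 2 - x 0 ^ 2)) = 0 by
            linear_combination h1 - h2 + (x 1 * (x 1 * x 2 - x 0 ^ 2)) * hq) with h | h
        · exact absurd h (mul_ne_zero (by norm_num) hw0)
        · exact h
      have hB : x 2 * (x 0 ^ 2 - x 1 * x 2) = 0 := by
        rcases mul_eq_zero.mp (show ((3 : ℂ) * ω) * (x 2 * (x 0 ^ 2 - x 1 * x 2)) = 0 by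
            linear_combination h3 - h4 + (x 2 * (x 0 ^ 2 - x 1 * x 2)) * hq) with h | h
        · exact absurd h (mul_ne_zero (by norm_num) hw0)
        · exact h
      by_cases hbc : x 1 * x 2 - x 0 ^ 2 = 0
      · have hC : x 2 * (x 0 * x 2 - x 1 ^ 2) = 0 := by
          rcases mul_eq_zero.mp
              (show ((ω - 1) * ω ^ 2) * (x 2 * (x 0 * x 2 - x 1 ^ 2)) = 0 by
            linear_combination h1 + ((ω - 1) * ω * x 1) * hbc
              + (-(ω - 1) * (x 1 ^ 2 * x 2 - x 0 * x 2 ^ 2)) * hq) with h | h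
          · exact absurd h (mul_ne_zero hwm1 (pow_ne_zero 2 hw0))
          · exact h
        have hD : x 1 * (x 0 * x 1 - x 2 ^ 2) = 0 := by
          rcases mul_eq_zero.mp
              (show ((1 - ω) * ω ^ 2) * (x 1 * (x 0 * x 1 - x 2 ^ 2)) = 0 by
            linear_combination h3 + ((1 - ω) * ω * x 2) * hbc
              + (-(1 - ω) * (x 1 * x 2 ^ 2 - x 0 * x 1 ^ 2)) * hq) with h | h
          · exact absurd h (mul_ne_zero (fun h' => hwm1 (by linear_combination -h'))
              (pow_ne_zero 2 hw0))
          · exact h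
        by_cases hc0 : x 2 = 0
        · have ha0 : x 0 = 0 := by
            have hsq : x 0 ^ 2 = 0 := by linear_combination -hbc + x 1 * hc0
            exact pow_eq_zero_iff (by norm_num) |>.mp hsq
          have hb0 : x 1 ≠ 0 := by
            intro hb
            apply hx
            funext i; fin_cases i
            · exact ha0
            · exact hb
            · exact hc0
          refine ⟨x 1, hb0, Or.inr (Or.inl ?_)⟩
          funext i; fin_cases i
          · simpa using ha0
          · simp
          · simpa using hc0
        · have hac : x 0 * x 2 - x 1 ^ 2 = 0 := (mul_eq_zero.mp hC).resolve_left hc0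
          by_cases hb0 : x 1 = 0
          · have ha0 : x 0 = 0 := by
              have h0 : x 0 * x 2 = 0 := by linear_combination hac + x 1 * hb0
              exact (mul_eq_zero.mp h0).resolve_right hc0
            refine ⟨x 2, hc0, Or.inr (Or.inr (Or.inl ?_))⟩
            funext i; fin_cases i
            · simpa using ha0
            · simpa using hb0
            · simp
          · have hab : x 0 * x 1 - x 2 ^ 2 = 0 := (mul_eq_zero.mp hD).resolve_left hb0
            have ha0 : x 0 ≠ 0 := by
              intro h
              apply hb0
              have hsq : x 1 ^ 2 = 0 := by linear_combination -hac + x 2 * h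
              exact pow_eq_zero_iff (by norm_num) |>.mp hsq
            have hb3 : x 1 ^ 3 - x 0 ^ 3 = 0 := by
              linear_combination (-(x 1)) * hac + x 0 * hbc
            have hcube : (x 1 - x 0) * (x 1 - ω * x 0) * (x 1 - ω ^ 2 * x 0) = 0 := by
              linear_combination hb3
                + (-(x 0) * x 1 ^ 2 + x 0 ^ 3 + ω * x 0 ^ 2 * x 1 - ω * x 0 ^ 3) * hq
            refine ⟨x 0, ha0, ?_⟩
            rcases mul_eq_zero.mp hcube with h | h
            · rcases mul_eq_zero.mp h with h' | h'
              · have hb : x 1 = x 0 := sub_eq_zero.mp h'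
                have hc : x 2 = x 0 := by
                  have h0 : x 0 * x 2 = x 0 * x 0 := by linear_combination hbc - x 2 * h'
                  exact mul_left_cancel₀ ha0 h0
                refine Or.inr (Or.inr (Or.inr (Or.inl ?_)))
                funext i; fin_cases i
                · simp
                · simpa using hb
                · simpa using hc
              · have hc : x 2 = ω ^ 2 * x 0 := by
                  have h0 : (ω * x 0) * x 2 = (ω * x 0) * (ω ^ 2 * x 0) := by
                    linear_combination hbc - x 2 * h' - x 0 ^ 2 * hw3
                  exact mul_left_cancel₀ (mul_ne_zero hw0 ha0) h0
                refine Or.inr (Or.inr (Or.inr (Or.inr (Or.inl ?_))))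
                funext i; fin_cases i
                · simp
                · simpa [mul_comm] using sub_eq_zero.mp h'
                · simpa [mul_comm] using hc
            · have hc : x 2 = ω * x 0 := by
                have h0 : (ω ^ 2 * x 0) * x 2 = (ω ^ 2 * x 0) * (ω * x 0) := by
                  linear_combination hbc - x 2 * h - x 0 ^ 2 * hw3
                exact mul_left_cancel₀ (mul_ne_zero (pow_ne_zero 2 hw0) ha0) h0
              refine Or.inr (Or.inr (Or.inr (Or.inr (Or.inr ?_))))
              funext i; fin_cases i
              · simp
              · simpa [mul_comm] using sub_eq_zero.mp h
              · simpa [mul_comm] using hc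
      · have hb0 : x 1 = 0 := (mul_eq_zero.mp hA).resolve_right hbc
        have hc0 : x 2 = 0 := by
          rcases mul_eq_zero.mp hB with h | h
          · exact h
          · exact absurd (show x 1 * x 2 - x 0 ^ 2 = 0 by linear_combination -h) hbc
        have ha0 : x 0 ≠ 0 := fun h => hbc (by linear_combination x 2 * hb0 - x 0 * h)
        refine ⟨x 0, ha0, Or.inl ?_⟩
        funext i; fin_cases i
        · simp
        · simpa using hb0
        · simpa using hc0
    · rintro ⟨t, ht, hcase⟩
      rcases hcase with h | h | h | h | h | h
      · -- (1, 0, 0)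
        have e0 : x 0 = t := by rw [h]; simp
        have e1 : x 1 = 0 := by rw [h]; simp
        have e2 : x 2 = 0 := by rw [h]; simp
        refine le_antisymm (rank_le_two' M (M 1) (M 2) ?_) (two_le_rank' M 1 2 0 2 ?_)
        · intro i
          fin_cases i
          · exact ⟨0, 0, by funext j; fin_cases j <;> simp [hMdef, e1, e2, Matrix.vecHead, Matrix.vecTail]⟩
          · exact ⟨1, 0, by funext j; fin_cases j <;> simp [hMdef]⟩
          · exact ⟨0, 1, by funext j; fin_cases j <;> simp [hMdef]⟩
        · have hval : M 1 0 * M 2 2 - M 1 2 * M 2 0 = -(ω ^ 2 * t ^ 2) := by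
            simp [hMdef, e0, e1, e2]; ring
          rw [hval]
          simpa using mul_ne_zero (pow_ne_zero 2 hw0) (pow_ne_zero 2 ht)
      · -- (0, 1, 0)
        have e0 : x 0 = 0 := by rw [h]; simp
        have e1 : x 1 = t := by rw [h]; simp
        have e2 : x 2 = 0 := by rw [h]; simp
        refine le_antisymm (rank_le_two' M (M 0) (M 2) ?_) (two_le_rank' M 0 2 0 2 ?_)
        · intro i
          fin_cases i
          · exact ⟨1, 0, by funext j; fin_cases j <;> simp [hMdef]⟩
          · exact ⟨0, 0, by funext j; fin_cases j <;> simp [hMdef, e0, e2, Matrix.vecHead, Matrix.vecTail]⟩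
          · exact ⟨0, 1, by funext j; fin_cases j <;> simp [hMdef]⟩
        · have hval : M 0 0 * M 2 2 - M 0 2 * M 2 0 = t ^ 2 := by
            simp [hMdef, e0, e1, e2]; ring
          rw [hval]
          exact pow_ne_zero 2 ht
      · -- (0, 0, 1)
        have e0 : x 0 = 0 := by rw [h]; simp
        have e1 : x 1 = 0 := by rw [h]; simp
        have e2 : x 2 = t := by rw [h]; simp
        refine le_antisymm (rank_le_two' M (M 0) (M 1) ?_) (two_le_rank' M 0 1 0 2 ?_)
        · intro i
          fin_cases i
          · exact ⟨1, 0, by funext j; fin_cases j <;> simp [hMdef]⟩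
          · exact ⟨0, 1, by funext j; fin_cases j <;> simp [hMdef]⟩
          · exact ⟨0, 0, by funext j; fin_cases j <;> simp [hMdef, e0, e1, Matrix.vecHead, Matrix.vecTail]⟩
        · have hval : M 0 0 * M 1 2 - M 0 2 * M 1 0 = -(t ^ 2) := by
            simp [hMdef, e0, e1, e2]; ring
          rw [hval]
          simpa using pow_ne_zero 2 ht
      · -- (1, 1, 1)
        have e0 : x 0 = t := by rw [h]; simp
        have e1 : x 1 = t := by rw [h]; simp
        have e2 : x 2 = t := by rw [h]; simp
        refine le_antisymm (rank_le_two' M (M 1) (M 2) ?_) (two_le_rank' M 0 1 0 1 ?_)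
        · intro i
          fin_cases i
          · refine ⟨-ω, -ω, ?_⟩
            funext j; fin_cases j <;>
              simp [hMdef, e0, e1, e2, Matrix.vecHead, Matrix.vecTail, hw3, hp4] <;>
              first
                | ring1
                | linear_combination (t) * hq
                | linear_combination (t * ω) * hq
                | linear_combination (t * ω ^ 2) * hq
                | linear_combination (-t) * hq
                | linear_combination (-(t * ω)) * hq
                | linear_combination (-(t * ω ^ 2)) * hq
                | linear_combination (t) * hw3
                | linear_combination (t * ω) * hw3
                | linear_combination (t * ω ^ 2) * hw3
                | linear_combination (-t) * hw3
                | linear_combination (-(t * ω)) * hw3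
                | linear_combination (-(t * ω ^ 2)) * hw3
                | linear_combination (t) * hq + (t) * hw3
                | linear_combination (t) * hq + (t * ω) * hw3
                | linear_combination (t) * hq + (t * ω ^ 2) * hw3
                | linear_combination (t) * hq + (-t) * hw3
                | linear_combination (t) * hq + (-(t * ω)) * hw3
                | linear_combination (t) * hq + (-(t * ω ^ 2)) * hw3
                | linear_combination (t * ω) * hq + (t) * hw3
                | linear_combination (t * ω) * hq + (t * ω) * hw3
                | linear_combination (t * ω) * hq + (t * ω ^ 2) * hw3
                | linear_combination (t * ω) * hq + (-t) * hw3
                | linear_combination (t * ω) * hq + (-(t * ω)) * hw3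
                | linear_combination (t * ω) * hq + (-(t * ω ^ 2)) * hw3
                | linear_combination (t * ω ^ 2) * hq + (t) * hw3
                | linear_combination (t * ω ^ 2) * hq + (t * ω) * hw3
                | linear_combination (t * ω ^ 2) * hq + (t * ω ^ 2) * hw3
                | linear_combination (t * ω ^ 2) * hq + (-t) * hw3
                | linear_combination (t * ω ^ 2) * hq + (-(t * ω)) * hw3
                | linear_combination (t * ω ^ 2) * hq + (-(t * ω ^ 2)) * hw3
                | linear_combination (-t) * hq + (t) * hw3
                | linear_combination (-t) * hq + (t * ω) * hw3
                | linear_combination (-t) * hq + (t * ω ^ 2) * hw3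
                | linear_combination (-t) * hq + (-t) * hw3
                | linear_combination (-t) * hq + (-(t * ω)) * hw3
                | linear_combination (-t) * hq + (-(t * ω ^ 2)) * hw3
                | linear_combination (-(t * ω)) * hq + (t) * hw3
                | linear_combination (-(t * ω)) * hq + (t * ω) * hw3
                | linear_combination (-(t * ω)) * hq + (t * ω ^ 2) * hw3
                | linear_combination (-(t * ω)) * hq + (-t) * hw3
                | linear_combination (-(t * ω)) * hq + (-(t * ω)) * hw3
                | linear_combination (-(t * ω)) * hq + (-(t * ω ^ 2)) * hw3
                | linear_combination (-(t * ω ^ 2)) * hq + (t) * hw3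
                | linear_combination (-(t * ω ^ 2)) * hq + (t * ω) * hw3
                | linear_combination (-(t * ω ^ 2)) * hq + (t * ω ^ 2) * hw3
                | linear_combination (-(t * ω ^ 2)) * hq + (-t) * hw3
                | linear_combination (-(t * ω ^ 2)) * hq + (-(t * ω)) * hw3
                | linear_combination (-(t * ω ^ 2)) * hq + (-(t * ω ^ 2)) * hw3
          · exact ⟨1, 0, by funext j; fin_cases j <;> simp [hMdef]⟩
          · exact ⟨0, 1, by funext j; fin_cases j <;> simp [hMdef]⟩
        · have hval : M 0 0 * M 1 1 - M 0 1 * M 1 0 = t ^ 2 * (ω - 1) := by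
            simp [hMdef, e0, e1, e2]; ring
          rw [hval]
          exact mul_ne_zero (pow_ne_zero 2 ht) hwm1
      · -- (1, ω, ω²)
        have e0 : x 0 = t := by rw [h]; simp
        have e1 : x 1 = t * ω := by rw [h]; simp
        have e2 : x 2 = t * ω ^ 2 := by rw [h]; simp
        refine le_antisymm (rank_le_two' M (M 1) (M 2) ?_) (two_le_rank' M 0 1 0 1 ?_)
        · intro i
          fin_cases i
          · refine ⟨-1, -(ω ^ 2), ?_⟩
            funext j; fin_cases j <;>
              simp [hMdef, e0, e1, e2, Matrix.vecHead, Matrix.vecTail, hw3, hp4] <;>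
              first
                | ring1
                | linear_combination (t) * hq
                | linear_combination (t * ω) * hq
                | linear_combination (t * ω ^ 2) * hq
                | linear_combination (-t) * hq
                | linear_combination (-(t * ω)) * hq
                | linear_combination (-(t * ω ^ 2)) * hq
                | linear_combination (t) * hw3
                | linear_combination (t * ω) * hw3
                | linear_combination (t * ω ^ 2) * hw3
                | linear_combination (-t) * hw3
                | linear_combination (-(t * ω)) * hw3
                | linear_combination (-(t * ω ^ 2)) * hw3
                | linear_combination (t) * hq + (t) * hw3
                | linear_combination (t) * hq + (t * ω) * hw3
                | linear_combination (t) * hq + (t * ω ^ 2) * hw3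
                | linear_combination (t) * hq + (-t) * hw3
                | linear_combination (t) * hq + (-(t * ω)) * hw3
                | linear_combination (t) * hq + (-(t * ω ^ 2)) * hw3
                | linear_combination (t * ω) * hq + (t) * hw3
                | linear_combination (t * ω) * hq + (t * ω) * hw3
                | linear_combination (t * ω) * hq + (t * ω ^ 2) * hw3
                | linear_combination (t * ω) * hq + (-t) * hw3
                | linear_combination (t * ω) * hq + (-(t * ω)) * hw3
                | linear_combination (t * ω) * hq + (-(t * ω ^ 2)) * hw3
                | linear_combination (t * ω ^ 2) * hq + (t) * hw3
                | linear_combination (t * ω ^ 2) * hq + (t * ω) * hw3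
                | linear_combination (t * ω ^ 2) * hq + (t * ω ^ 2) * hw3
                | linear_combination (t * ω ^ 2) * hq + (-t) * hw3
                | linear_combination (t * ω ^ 2) * hq + (-(t * ω)) * hw3
                | linear_combination (t * ω ^ 2) * hq + (-(t * ω ^ 2)) * hw3
                | linear_combination (-t) * hq + (t) * hw3
                | linear_combination (-t) * hq + (t * ω) * hw3
                | linear_combination (-t) * hq + (t * ω ^ 2) * hw3
                | linear_combination (-t) * hq + (-t) * hw3
                | linear_combination (-t) * hq + (-(t * ω)) * hw3
                | linear_combination (-t) * hq + (-(t * ω ^ 2)) * hw3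
                | linear_combination (-(t * ω)) * hq + (t) * hw3
                | linear_combination (-(t * ω)) * hq + (t * ω) * hw3
                | linear_combination (-(t * ω)) * hq + (t * ω ^ 2) * hw3
                | linear_combination (-(t * ω)) * hq + (-t) * hw3
                | linear_combination (-(t * ω)) * hq + (-(t * ω)) * hw3
                | linear_combination (-(t * ω)) * hq + (-(t * ω ^ 2)) * hw3
                | linear_combination (-(t * ω ^ 2)) * hq + (t) * hw3
                | linear_combination (-(t * ω ^ 2)) * hq + (t * ω) * hw3
                | linear_combination (-(t * ω ^ 2)) * hq + (t * ω ^ 2) * hw3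
                | linear_combination (-(t * ω ^ 2)) * hq + (-t) * hw3
                | linear_combination (-(t * ω ^ 2)) * hq + (-(t * ω)) * hw3
                | linear_combination (-(t * ω ^ 2)) * hq + (-(t * ω ^ 2)) * hw3
          · exact ⟨1, 0, by funext j; fin_cases j <;> simp [hMdef]⟩
          · exact ⟨0, 1, by funext j; fin_cases j <;> simp [hMdef]⟩
        · have hval : M 0 0 * M 1 1 - M 0 1 * M 1 0 = t ^ 2 * (ω - 1) := by
            have expand : M 0 0 * M 1 1 - M 0 1 * M 1 0
                = (t * ω) * (ω * (t * ω ^ 2)) - (t * ω) * (t * ω ^ 2) := by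
              simp [hMdef, e0, e1, e2]
            rw [expand]
            linear_combination (t ^ 2 * ω - t ^ 2) * hw3
          rw [hval]
          exact mul_ne_zero (pow_ne_zero 2 ht) hwm1
      · -- (1, ω², ω)
        have e0 : x 0 = t := by rw [h]; simp
        have e1 : x 1 = t * ω ^ 2 := by rw [h]; simp
        have e2 : x 2 = t * ω := by rw [h]; simp
        refine le_antisymm (rank_le_two' M (M 1) (M 2) ?_) (two_le_rank' M 0 1 0 1 ?_)
        · intro i
          fin_cases i
          · refine ⟨-(ω ^ 2), -1, ?_⟩
            funext j; fin_cases j <;>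
              simp [hMdef, e0, e1, e2, Matrix.vecHead, Matrix.vecTail, hw3, hp4] <;>
              first
                | ring1
                | linear_combination (t) * hq
                | linear_combination (t * ω) * hq
                | linear_combination (t * ω ^ 2) * hq
                | linear_combination (-t) * hq
                | linear_combination (-(t * ω)) * hq
                | linear_combination (-(t * ω ^ 2)) * hq
                | linear_combination (t) * hw3
                | linear_combination (t * ω) * hw3
                | linear_combination (t * ω ^ 2) * hw3
                | linear_combination (-t) * hw3
                | linear_combination (-(t * ω)) * hw3
                | linear_combination (-(t * ω ^ 2)) * hw3
                | linear_combination (t) * hq + (t) * hw3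
                | linear_combination (t) * hq + (t * ω) * hw3
                | linear_combination (t) * hq + (t * ω ^ 2) * hw3
                | linear_combination (t) * hq + (-t) * hw3
                | linear_combination (t) * hq + (-(t * ω)) * hw3
                | linear_combination (t) * hq + (-(t * ω ^ 2)) * hw3
                | linear_combination (t * ω) * hq + (t) * hw3
                | linear_combination (t * ω) * hq + (t * ω) * hw3
                | linear_combination (t * ω) * hq + (t * ω ^ 2) * hw3
                | linear_combination (t * ω) * hq + (-t) * hw3
                | linear_combination (t * ω) * hq + (-(t * ω)) * hw3
                | linear_combination (t * ω) * hq + (-(t * ω ^ 2)) * hw3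
                | linear_combination (t * ω ^ 2) * hq + (t) * hw3
                | linear_combination (t * ω ^ 2) * hq + (t * ω) * hw3
                | linear_combination (t * ω ^ 2) * hq + (t * ω ^ 2) * hw3
                | linear_combination (t * ω ^ 2) * hq + (-t) * hw3
                | linear_combination (t * ω ^ 2) * hq + (-(t * ω)) * hw3
                | linear_combination (t * ω ^ 2) * hq + (-(t * ω ^ 2)) * hw3
                | linear_combination (-t) * hq + (t) * hw3
                | linear_combination (-t) * hq + (t * ω) * hw3
                | linear_combination (-t) * hq + (t * ω ^ 2) * hw3
                | linear_combination (-t) * hq + (-t) * hw3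
                | linear_combination (-t) * hq + (-(t * ω)) * hw3
                | linear_combination (-t) * hq + (-(t * ω ^ 2)) * hw3
                | linear_combination (-(t * ω)) * hq + (t) * hw3
                | linear_combination (-(t * ω)) * hq + (t * ω) * hw3
                | linear_combination (-(t * ω)) * hq + (t * ω ^ 2) * hw3
                | linear_combination (-(t * ω)) * hq + (-t) * hw3
                | linear_combination (-(t * ω)) * hq + (-(t * ω)) * hw3
                | linear_combination (-(t * ω)) * hq + (-(t * ω ^ 2)) * hw3
                | linear_combination (-(t * ω ^ 2)) * hq + (t) * hw3
                | linear_combination (-(t * ω ^ 2)) * hq + (t * ω) * hw3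
                | linear_combination (-(t * ω ^ 2)) * hq + (t * ω ^ 2) * hw3
                | linear_combination (-(t * ω ^ 2)) * hq + (-t) * hw3
                | linear_combination (-(t * ω ^ 2)) * hq + (-(t * ω)) * hw3
                | linear_combination (-(t * ω ^ 2)) * hq + (-(t * ω ^ 2)) * hw3
          · exact ⟨1, 0, by funext j; fin_cases j <;> simp [hMdef]⟩
          · exact ⟨0, 1, by funext j; fin_cases j <;> simp [hMdef]⟩
        · have hval : M 0 0 * M 1 1 - M 0 1 * M 1 0 = t ^ 2 * (ω - 1) := by
            have expand : M 0 0 * M 1 1 - M 0 1 * M 1 0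
                = (t * ω ^ 2) * (ω * (t * ω)) - (t * ω ^ 2) * (t * ω) := by
              simp [hMdef, e0, e1, e2]
            rw [expand]
            linear_combination (t ^ 2 * ω - t ^ 2) * hw3
          rw [hval]
          exact mul_ne_zero (pow_ne_zero 2 ht) hwm1
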